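/- Let A be a commutative ring and let t, b ∈ A satisfy t·b⁹ = b − 1. Then 1 − b⁶ + 6t·b¹² − 3t²·b¹⁸ + 2t³·b³⁰ + 3t⁴·b³⁶ − t⁶·b⁵⁴ = 0; equivalently, X = −b⁶ is a root of the polynomial F(X) = 1 + X + 6tX² + 3t²X³ − 2t³X⁵ + 3t⁴X⁶ + t⁶X⁹. -/
import Mathlib

/-- in a commutative ring, if `t·b⁹ = b − 1`, then
`1 − b⁶ + 6t·b¹² − 3t²·b¹⁸ + 2t³·b³⁰ + 3t⁴·b³⁶ − t⁶·b⁵⁴ = 0`; i.e. `X = −b⁶` is a root of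
the key polynomial `F(X) = 1 + X + 6tX² + 3t²X³ − 2t³X⁵ + 3t⁴X⁶ + t⁶X⁹`. -/
theorem keyPolynomial_root {A : Type*} [CommRing A] (t b : A) (hb : t * b ^ 9 = b - 1) :
    1 - b ^ 6 + 6 * t * b ^ 12 - 3 * t ^ 2 * b ^ 18 + 2 * t ^ 3 * b ^ 30
      + 3 * t ^ 4 * b ^ 36 - t ^ 6 * b ^ 54 = 0 := by
  have h2 : t ^ 2 * b ^ 18 = (b - 1) ^ 2 := by rw [show t ^ 2 * b ^ 18 = (t * b ^ 9) ^ 2 by ring, hb]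
  have h3 : t ^ 3 * b ^ 27 = (b - 1) ^ 3 := by rw [show t ^ 3 * b ^ 27 = (t * b ^ 9) ^ 3 by ring, hb]
  have h4 : t ^ 4 * b ^ 36 = (b - 1) ^ 4 := by rw [show t ^ 4 * b ^ 36 = (t * b ^ 9) ^ 4 by ring, hb]
  have h6 : t ^ 6 * b ^ 54 = (b - 1) ^ 6 := by rw [show t ^ 6 * b ^ 54 = (t * b ^ 9) ^ 6 by ring, hb]
  linear_combination (6 * b ^ 3) * hb - 3 * h2 + (2 * b ^ 3) * h3 + 3 * h4 - h6
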